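/- Let n ≥ 1 and let g be an invertible complex n×n matrix such that for every k ∈ {0,1,…,n}, the n×n matrix whose first k columns are the standard basis vectors e₁,…,e_k and whose remaining n−k columns are the first n−k columns of g is invertible. Then there exist unique unipotent upper-triangular matrices x and y such that x⁻¹·g·y is counter-diagonal. -/
import Mathlib


/-- A matrix is unipotent upper-triangular if its diagonal entries are all `1`
and its entries below the diagonal are all `0`. -/
def IsUnipotentUpperTriangular {n : ℕ} (x : Matrix (Fin n) (Fin n) ℂ) : Prop :=
  (∀ i : Fin n, x i i = 1) ∧ ∀ i j : Fin n, j < i → x i j = 0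

/-- A matrix `a` is counter-diagonal if `a i j = 0` whenever `i + j ≠ n + 1`
(in the 1-based indexing `i, j ∈ {1, …, n}`; in 0-based indexing this reads
`i + j + 1 ≠ n`). -/
def IsCounterDiagonal {n : ℕ} (a : Matrix (Fin n) (Fin n) ℂ) : Prop :=
  ∀ i j : Fin n, (i : ℕ) + (j : ℕ) + 1 ≠ n → a i j = 0

/-- The `n × n` matrix whose first `k` columns are the standard basis vectors
`e₁, …, e_k` and whose remaining `n - k` columns are the first `n - k` columns of `g`. -/
noncomputable def flagPairMatrix {n : ℕ} (g : Matrix (Fin n) (Fin n) ℂ) (k : ℕ) :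
    Matrix (Fin n) (Fin n) ℂ :=
  Matrix.of fun i j =>
    if (j : ℕ) < k then (if (i : ℕ) = (j : ℕ) then 1 else 0)
    else g i ⟨(j : ℕ) - k, lt_of_le_of_lt (Nat.sub_le _ _) j.isLt⟩

open Matrix Finset

namespace CDNF

variable {n : ℕ}

/-- lower unipotent triangular -/
def LowU (M : Matrix (Fin n) (Fin n) ℂ) : Prop :=
  (∀ i, M i i = 1) ∧ ∀ i j : Fin n, i < j → M i j = 0

abbrev UpU (M : Matrix (Fin n) (Fin n) ℂ) : Prop := IsUnipotentUpperTriangular M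

def DiagP (M : Matrix (Fin n) (Fin n) ℂ) : Prop := ∀ i j : Fin n, i ≠ j → M i j = 0

lemma UpU.bt {M : Matrix (Fin n) (Fin n) ℂ} (h : UpU M) : M.BlockTriangular id :=
  fun i j hij => h.2 i j hij

lemma LowU.bt {M : Matrix (Fin n) (Fin n) ℂ} (h : LowU M) :
    M.BlockTriangular OrderDual.toDual := fun i j hij => h.2 i j (by simpa using hij)

lemma UpU.det_eq_one {M : Matrix (Fin n) (Fin n) ℂ} (h : UpU M) : M.det = 1 := by
  rw [Matrix.det_of_upperTriangular h.bt]; simp [h.1]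

lemma LowU.det_eq_one {M : Matrix (Fin n) (Fin n) ℂ} (h : LowU M) : M.det = 1 := by
  rw [Matrix.det_of_lowerTriangular M h.bt]; simp [h.1]

lemma UpU.isUnitDet {M : Matrix (Fin n) (Fin n) ℂ} (h : UpU M) : IsUnit M.det := by
  simp [h.det_eq_one]

lemma LowU.isUnitDet {M : Matrix (Fin n) (Fin n) ℂ} (h : LowU M) : IsUnit M.det := by
  simp [h.det_eq_one]

lemma mul_diag_up {M N : Matrix (Fin n) (Fin n) ℂ}
    (hM : ∀ i j : Fin n, j < i → M i j = 0) (hN : ∀ i j : Fin n, j < i → N i j = 0)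
    (i : Fin n) : (M * N) i i = M i i * N i i := by
  rw [Matrix.mul_apply]
  refine Finset.sum_eq_single i (fun j _ hj => ?_) (by simp)
  rcases lt_or_gt_of_ne hj with h | h
  · rw [hM i j h, zero_mul]
  · rw [hN j i h, mul_zero]

lemma mul_diag_low {M N : Matrix (Fin n) (Fin n) ℂ}
    (hM : ∀ i j : Fin n, i < j → M i j = 0) (hN : ∀ i j : Fin n, i < j → N i j = 0)
    (i : Fin n) : (M * N) i i = M i i * N i i := by
  rw [Matrix.mul_apply]
  refine Finset.sum_eq_single i (fun j _ hj => ?_) (by simp)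
  rcases lt_or_gt_of_ne hj with h | h
  · rw [hN j i h, mul_zero]
  · rw [hM i j h, zero_mul]

lemma up_mul {M N : Matrix (Fin n) (Fin n) ℂ}
    (hM : ∀ i j : Fin n, j < i → M i j = 0) (hN : ∀ i j : Fin n, j < i → N i j = 0) :
    ∀ i j : Fin n, j < i → (M * N) i j = 0 := by
  intro i j hij
  rw [Matrix.mul_apply]
  refine Finset.sum_eq_zero fun k _ => ?_
  rcases lt_or_ge k i with h | h
  · rw [hM i k h, zero_mul]
  · rw [hN k j (lt_of_lt_of_le hij h), mul_zero]

lemma low_mul {M N : Matrix (Fin n) (Fin n) ℂ}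
    (hM : ∀ i j : Fin n, i < j → M i j = 0) (hN : ∀ i j : Fin n, i < j → N i j = 0) :
    ∀ i j : Fin n, i < j → (M * N) i j = 0 := by
  intro i j hij
  rw [Matrix.mul_apply]
  refine Finset.sum_eq_zero fun k _ => ?_
  rcases lt_or_ge i k with h | h
  · rw [hM i k h, zero_mul]
  · rw [hN k j (lt_of_le_of_lt h hij), mul_zero]

lemma UpU.inv {M : Matrix (Fin n) (Fin n) ℂ} (h : UpU M) : UpU M⁻¹ := by
  have hd := h.isUnitDet
  haveI := M.invertibleOfIsUnitDet hd
  have hbt : M⁻¹.BlockTriangular id := Matrix.blockTriangular_inv_of_blockTriangular h.bt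
  have htri : ∀ i j : Fin n, j < i → M⁻¹ i j = 0 := fun i j hij => hbt hij
  refine ⟨fun i => ?_, htri⟩
  have h1 : (M * M⁻¹) i i = 1 := by rw [Matrix.mul_nonsing_inv M hd]; simp
  rw [mul_diag_up h.2 htri i, h.1] at h1
  simpa using h1

lemma LowU.inv {M : Matrix (Fin n) (Fin n) ℂ} (h : LowU M) : LowU M⁻¹ := by
  have hd := h.isUnitDet
  haveI := M.invertibleOfIsUnitDet hd
  have hbt : M⁻¹.BlockTriangular OrderDual.toDual :=
    Matrix.blockTriangular_inv_of_blockTriangular h.bt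
  have htri : ∀ i j : Fin n, i < j → M⁻¹ i j = 0 := fun i j hij => hbt (by simpa using hij)
  refine ⟨fun i => ?_, htri⟩
  have h1 : (M * M⁻¹) i i = 1 := by rw [Matrix.mul_nonsing_inv M hd]; simp
  rw [mul_diag_low h.2 htri i, h.1] at h1
  simpa using h1

lemma LowU.mul {M N : Matrix (Fin n) (Fin n) ℂ} (hM : LowU M) (hN : LowU N) :
    LowU (M * N) :=
  ⟨fun i => by rw [mul_diag_low hM.2 hN.2, hM.1, hN.1, one_mul],
   low_mul hM.2 hN.2⟩

lemma UpU.mul {M N : Matrix (Fin n) (Fin n) ℂ} (hM : UpU M) (hN : UpU N) :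
    UpU (M * N) :=
  ⟨fun i => by rw [mul_diag_up hM.2 hN.2, hM.1, hN.1, one_mul],
   up_mul hM.2 hN.2⟩


theorem ldu_unique {A L₁ D₁ U₁ L₂ D₂ U₂ : Matrix (Fin n) (Fin n) ℂ}
    (hA : IsUnit A.det)
    (hL₁ : LowU L₁) (hD₁ : DiagP D₁) (hU₁ : UpU U₁)
    (hL₂ : LowU L₂) (hD₂ : DiagP D₂) (hU₂ : UpU U₂)
    (h1 : A = L₁ * D₁ * U₁) (h2 : A = L₂ * D₂ * U₂) :
    L₁ = L₂ ∧ D₁ = D₂ ∧ U₁ = U₂ := by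
  have hD₁det : IsUnit D₁.det := by
    have := hA
    rw [h1, Matrix.det_mul, Matrix.det_mul, hL₁.det_eq_one, hU₁.det_eq_one,
      one_mul, mul_one] at this
    exact this
  have hD₂det : IsUnit D₂.det := by
    have := hA
    rw [h2, Matrix.det_mul, Matrix.det_mul, hL₂.det_eq_one, hU₂.det_eq_one,
      one_mul, mul_one] at this
    exact this
  have hP : LowU (L₂⁻¹ * L₁) := hL₂.inv.mul hL₁
  have hQ : UpU (U₂ * U₁⁻¹) := hU₂.mul hU₁.inv
  have e : L₁ * D₁ * U₁ = L₂ * D₂ * U₂ := h1.symm.trans h2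
  have key : (L₂⁻¹ * L₁) * D₁ = D₂ * (U₂ * U₁⁻¹) := by
    calc (L₂⁻¹ * L₁) * D₁ = L₂⁻¹ * (L₁ * D₁) := Matrix.mul_assoc _ _ _
      _ = L₂⁻¹ * (L₁ * D₁ * U₁ * U₁⁻¹) := by
            rw [Matrix.mul_nonsing_inv_cancel_right _ _ hU₁.isUnitDet]
      _ = L₂⁻¹ * (L₂ * (D₂ * (U₂ * U₁⁻¹))) := by
            rw [e]; simp only [Matrix.mul_assoc]
      _ = D₂ * (U₂ * U₁⁻¹) := Matrix.nonsing_inv_mul_cancel_left _ _ hL₂.isUnitDet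
  set P := L₂⁻¹ * L₁ with hPdef
  set Q := U₂ * U₁⁻¹ with hQdef
  have hD₁low : ∀ i j : Fin n, i < j → D₁ i j = 0 := fun i j hij => hD₁ i j hij.ne
  have hD₂up : ∀ i j : Fin n, j < i → D₂ i j = 0 := fun i j hij => hD₂ i j hij.ne'
  have hMlow : ∀ i j : Fin n, i < j → (P * D₁) i j = 0 := low_mul hP.2 hD₁low
  have hMup : ∀ i j : Fin n, j < i → (P * D₁) i j = 0 := by
    rw [key]; exact up_mul hD₂up hQ.2
  have hdiag1 : ∀ i, (P * D₁) i i = D₁ i i := fun i => by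
    rw [mul_diag_low hP.2 hD₁low, hP.1, one_mul]
  have hdiag2 : ∀ i, (P * D₁) i i = D₂ i i := fun i => by
    rw [key, mul_diag_up hD₂up hQ.2, hQ.1, mul_one]
  have hDD : D₁ = D₂ := by
    ext i j
    by_cases hij : i = j
    · subst hij; rw [← hdiag1, hdiag2]
    · rw [hD₁ i j hij, hD₂ i j hij]
  have hMD : P * D₁ = D₁ := by
    ext i j
    rcases lt_trichotomy i j with h | h | h
    · rw [hMlow i j h, hD₁ i j h.ne]
    · subst h; exact hdiag1 i
    · rw [hMup i j h, hD₁ i j h.ne']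
  have hP1 : P = 1 := by
    calc P = P * D₁ * D₁⁻¹ := (Matrix.mul_nonsing_inv_cancel_right _ _ hD₁det).symm
      _ = D₁ * D₁⁻¹ := by rw [hMD]
      _ = 1 := Matrix.mul_nonsing_inv _ hD₁det
  have hLL : L₁ = L₂ := by
    have : L₂ * P = L₂ * 1 := by rw [hP1]
    rw [hPdef, Matrix.mul_nonsing_inv_cancel_left _ _ hL₂.isUnitDet, Matrix.mul_one] at this
    exact this
  have hQ1 : Q = 1 := by
    have hDQ : D₂ * Q = D₂ * 1 := by
      rw [Matrix.mul_one, ← key, hMD, hDD]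
    calc Q = D₂⁻¹ * (D₂ * Q) := (Matrix.nonsing_inv_mul_cancel_left _ _ hD₂det).symm
      _ = D₂⁻¹ * (D₂ * 1) := by rw [hDQ]
      _ = 1 := Matrix.nonsing_inv_mul_cancel_left _ _ hD₂det
  have hUU : U₁ = U₂ := by
    have : Q * U₁ = 1 * U₁ := by rw [hQ1]
    rw [hQdef, Matrix.mul_assoc, Matrix.nonsing_inv_mul _ hU₁.isUnitDet, Matrix.mul_one,
      Matrix.one_mul] at this
    exact this.symm
  exact ⟨hLL, hDD, hUU⟩


lemma E_inl (a : Fin n) :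
    (finSumFinEquiv (Sum.inl a) : Fin (n + 1)) = Fin.castLE n.le_succ a := by
  ext; simp

lemma E_inr (a : Fin 1) :
    (finSumFinEquiv (Sum.inr a) : Fin (n + 1)) = Fin.last n := by
  have : a = 0 := Subsingleton.elim a 0
  subst this
  ext; simp

lemma lowU_reindex {L₁ : Matrix (Fin n) (Fin n) ℂ} (h : LowU L₁)
    (c : Matrix (Fin 1) (Fin n) ℂ) :
    LowU ((reindex finSumFinEquiv finSumFinEquiv) (fromBlocks L₁ 0 c 1) :
      Matrix (Fin (n + 1)) (Fin (n + 1)) ℂ) := by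
  constructor
  · intro i
    obtain ⟨s, rfl⟩ := finSumFinEquiv.surjective i
    cases s with
    | inl a => simp [h.1 a]
    | inr a => simp [Matrix.one_apply]
  · intro i j hij
    obtain ⟨s, rfl⟩ := finSumFinEquiv.surjective i
    obtain ⟨t, rfl⟩ := finSumFinEquiv.surjective j
    cases s with
    | inl a =>
      cases t with
      | inl b =>
        have hab : a < b := by
          rw [E_inl, E_inl, Fin.lt_def] at hij
          exact hij
        simp [h.2 a b hab]
      | inr b => simp
    | inr a =>
      cases t with
      | inl b =>
        exfalso
        rw [E_inr, E_inl, Fin.lt_def] at hij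
        simp at hij
        omega
      | inr b =>
        exfalso
        have : a = b := Subsingleton.elim a b
        subst this
        exact lt_irrefl _ hij

lemma upU_reindex {U₁ : Matrix (Fin n) (Fin n) ℂ} (h : UpU U₁)
    (b : Matrix (Fin n) (Fin 1) ℂ) :
    UpU ((reindex finSumFinEquiv finSumFinEquiv) (fromBlocks U₁ b 0 1) :
      Matrix (Fin (n + 1)) (Fin (n + 1)) ℂ) := by
  constructor
  · intro i
    obtain ⟨s, rfl⟩ := finSumFinEquiv.surjective i
    cases s with
    | inl a => simp [h.1 a]
    | inr a => simp [Matrix.one_apply]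
  · intro i j hij
    obtain ⟨s, rfl⟩ := finSumFinEquiv.surjective i
    obtain ⟨t, rfl⟩ := finSumFinEquiv.surjective j
    cases s with
    | inl a =>
      cases t with
      | inl b' =>
        have hab : b' < a := by
          rw [E_inl, E_inl, Fin.lt_def] at hij
          exact hij
        simp [h.2 a b' hab]
      | inr b' =>
        exfalso
        rw [E_inl, E_inr, Fin.lt_def] at hij
        simp at hij
        omega
    | inr a =>
      cases t with
      | inl b' => simp
      | inr b' =>
        exfalso
        have : a = b' := Subsingleton.elim a b'
        subst this
        exact lt_irrefl _ hij

lemma diagP_reindex {D₁ : Matrix (Fin n) (Fin n) ℂ} (h : DiagP D₁)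
    (δ : Matrix (Fin 1) (Fin 1) ℂ) :
    DiagP ((reindex finSumFinEquiv finSumFinEquiv) (fromBlocks D₁ 0 0 δ) :
      Matrix (Fin (n + 1)) (Fin (n + 1)) ℂ) := by
  intro i j hij
  obtain ⟨s, rfl⟩ := finSumFinEquiv.surjective i
  obtain ⟨t, rfl⟩ := finSumFinEquiv.surjective j
  cases s with
  | inl a =>
    cases t with
    | inl b =>
      have hab : a ≠ b := fun hab => hij (by rw [hab])
      simp [h a b hab]
    | inr b => simp
  | inr a =>
    cases t with
    | inl b => simp
    | inr b =>
      exact absurd (by rw [Subsingleton.elim a b]) hij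

def leading (A : Matrix (Fin n) (Fin n) ℂ) (k : ℕ) (hk : k ≤ n) :
    Matrix (Fin k) (Fin k) ℂ :=
  A.submatrix (Fin.castLE hk) (Fin.castLE hk)

theorem ldu_exists :
    ∀ (n : ℕ) (A : Matrix (Fin n) (Fin n) ℂ),
      (∀ (k : ℕ) (hk : k ≤ n), IsUnit (leading A k hk).det) →
      ∃ L D U : Matrix (Fin n) (Fin n) ℂ, LowU L ∧ DiagP D ∧ UpU U ∧ A = L * D * U := by
  intro n
  induction n with
  | zero =>
    intro A _
    exact ⟨1, 1, 1, ⟨fun i => i.elim0, fun i j _ => i.elim0⟩,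
      fun i j _ => i.elim0, ⟨fun i => i.elim0, fun i j _ => i.elim0⟩,
      Subsingleton.elim _ _⟩
  | succ n ih =>
    intro A hA
    set A₁ : Matrix (Fin n) (Fin n) ℂ := leading A n n.le_succ with hA₁def
    have hA₁lead : ∀ (k : ℕ) (hk : k ≤ n), IsUnit (leading A₁ k hk).det := by
      intro k hk
      have : leading A₁ k hk = leading A k (hk.trans n.le_succ) := by
        ext i j; rfl
      rw [this]
      exact hA k _
    obtain ⟨L₁, D₁, U₁, hL₁, hD₁, hU₁, hIH⟩ := ih A₁ hA₁lead
    have hD₁det : IsUnit D₁.det := by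
      have := hA n n.le_succ
      rw [← hA₁def, hIH, Matrix.det_mul, Matrix.det_mul, hL₁.det_eq_one, hU₁.det_eq_one,
        one_mul, mul_one] at this
      exact this
    set b : Matrix (Fin n) (Fin 1) ℂ :=
      Matrix.of fun i _ => A (Fin.castLE n.le_succ i) (Fin.last n) with hbdef
    set c : Matrix (Fin 1) (Fin n) ℂ :=
      Matrix.of fun _ j => A (Fin.last n) (Fin.castLE n.le_succ j) with hcdef
    set d : Matrix (Fin 1) (Fin 1) ℂ :=
      Matrix.of fun _ _ => A (Fin.last n) (Fin.last n) with hddef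
    have hAblocks : A = (reindex finSumFinEquiv finSumFinEquiv) (fromBlocks A₁ b c d) := by
      ext i j
      obtain ⟨s, rfl⟩ := finSumFinEquiv.surjective i
      obtain ⟨t, rfl⟩ := finSumFinEquiv.surjective j
      rw [Matrix.reindex_apply, Matrix.submatrix_apply, Equiv.symm_apply_apply,
        Equiv.symm_apply_apply]
      cases s with
      | inl a =>
        cases t with
        | inl b' => rw [Matrix.fromBlocks_apply₁₁, E_inl, E_inl]; rfl
        | inr b' => rw [Matrix.fromBlocks_apply₁₂, E_inl, E_inr]; rfl
      | inr a =>
        cases t with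
        | inl b' => rw [Matrix.fromBlocks_apply₂₁, E_inr, E_inl]; rfl
        | inr b' => rw [Matrix.fromBlocks_apply₂₂, E_inr, E_inr]; rfl
    set u : Matrix (Fin n) (Fin 1) ℂ := D₁⁻¹ * (L₁⁻¹ * b) with hudef
    set ℓ : Matrix (Fin 1) (Fin n) ℂ := c * U₁⁻¹ * D₁⁻¹ with hldef
    set δ : Matrix (Fin 1) (Fin 1) ℂ := d - ℓ * D₁ * u with hδdef
    have h12 : L₁ * D₁ * u = b := by
      rw [hudef, Matrix.mul_assoc, Matrix.mul_nonsing_inv_cancel_left _ _ hD₁det,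
        Matrix.mul_nonsing_inv_cancel_left _ _ hL₁.isUnitDet]
    have h21 : ℓ * D₁ * U₁ = c := by
      rw [hldef, Matrix.nonsing_inv_mul_cancel_right _ _ hD₁det,
        Matrix.nonsing_inv_mul_cancel_right _ _ hU₁.isUnitDet]
    have h22 : ℓ * D₁ * u + δ = d := by rw [hδdef]; abel
    have key : fromBlocks A₁ b c d =
        fromBlocks L₁ 0 ℓ 1 * fromBlocks D₁ 0 0 δ * fromBlocks U₁ u 0 1 := by
      rw [Matrix.fromBlocks_multiply, Matrix.fromBlocks_multiply]
      simp only [Matrix.mul_zero, Matrix.zero_mul, Matrix.mul_one, Matrix.one_mul,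
        add_zero, zero_add]
      rw [← hIH, h12, h21, h22]
    refine ⟨(reindex finSumFinEquiv finSumFinEquiv) (fromBlocks L₁ 0 ℓ 1),
      (reindex finSumFinEquiv finSumFinEquiv) (fromBlocks D₁ 0 0 δ),
      (reindex finSumFinEquiv finSumFinEquiv) (fromBlocks U₁ u 0 1),
      lowU_reindex hL₁ ℓ, diagP_reindex hD₁ δ, upU_reindex hU₁ u, ?_⟩
    conv_lhs => rw [hAblocks, key]
    simp only [Matrix.reindex_apply]
    rw [Matrix.submatrix_mul_equiv, Matrix.submatrix_mul_equiv]

/-- The reversal (antidiagonal permutation) matrix. -/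
def J (n : ℕ) : Matrix (Fin n) (Fin n) ℂ :=
  Matrix.of fun i j => if j = i.rev then 1 else 0

lemma J_mul (M : Matrix (Fin n) (Fin n) ℂ) (i j : Fin n) :
    (J n * M) i j = M i.rev j := by
  rw [Matrix.mul_apply]
  have : ∀ k : Fin n, J n i k * M k j = if k = i.rev then M k j else 0 := by
    intro k; by_cases h : k = i.rev <;> simp [J, h]
  simp only [this]
  simp

lemma mul_J (M : Matrix (Fin n) (Fin n) ℂ) (i j : Fin n) :
    (M * J n) i j = M i j.rev := by
  rw [Matrix.mul_apply]
  have : ∀ k : Fin n, M i k * J n k j = if k = j.rev then M i k else 0 := by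
    intro k
    by_cases h : k = j.rev
    · subst h; simp [J, Fin.rev_rev]
    · have : ¬(j = k.rev) := fun hj => h (by rw [hj, Fin.rev_rev])
      simp [J, this, h]
  simp only [this]
  simp

lemma J_mul_J : J n * J n = (1 : Matrix (Fin n) (Fin n) ℂ) := by
  ext i j
  rw [J_mul]
  by_cases h : i = j
  · subst h; simp [J, Matrix.one_apply]
  · have h1 : ¬(j = i.rev.rev) := by rw [Fin.rev_rev]; exact fun hj => h hj.symm
    simp only [J, Matrix.of_apply]
    rw [if_neg h1, Matrix.one_apply_ne h]

lemma J_J_cancel (M : Matrix (Fin n) (Fin n) ℂ) : J n * (J n * M) = M := by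
  rw [← Matrix.mul_assoc, J_mul_J, Matrix.one_mul]

lemma isUnit_J : IsUnit (J n) := by
  have : Invertible (J n) := ⟨J n, J_mul_J, J_mul_J⟩
  exact isUnit_of_invertible _

lemma upU_JLJ {L : Matrix (Fin n) (Fin n) ℂ} (h : LowU L) : UpU (J n * L * J n) := by
  constructor
  · intro i
    rw [mul_J, J_mul]
    exact h.1 _
  · intro i j hij
    rw [mul_J, J_mul]
    exact h.2 _ _ (by rwa [Fin.rev_lt_rev])

lemma lowU_JUJ {U : Matrix (Fin n) (Fin n) ℂ} (h : UpU U) : LowU (J n * U * J n) := by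
  constructor
  · intro i
    rw [mul_J, J_mul]
    exact h.1 _
  · intro i j hij
    rw [mul_J, J_mul]
    exact h.2 _ _ (by rwa [Fin.rev_lt_rev])

lemma counterDiag_J_mul {D : Matrix (Fin n) (Fin n) ℂ} (h : DiagP D) :
    ∀ i j : Fin n, (i : ℕ) + (j : ℕ) + 1 ≠ n → (J n * D) i j = 0 := by
  intro i j hij
  rw [J_mul]
  refine h _ _ fun hrev => hij ?_
  have h1 : (i.rev : ℕ) = n - (i + 1) := Fin.val_rev i
  have h2 : (i : ℕ) < n := i.isLt
  have := congrArg Fin.val hrev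
  omega

lemma diagP_J_mul {α : Matrix (Fin n) (Fin n) ℂ}
    (h : ∀ i j : Fin n, (i : ℕ) + (j : ℕ) + 1 ≠ n → α i j = 0) :
    DiagP (J n * α) := by
  intro i j hij
  rw [J_mul]
  refine h _ _ fun habs => hij ?_
  have h1 : (i.rev : ℕ) = n - (i + 1) := Fin.val_rev i
  have h2 : (i : ℕ) < n := i.isLt
  have h3 : (j : ℕ) < n := j.isLt
  exact Fin.ext (by omega)


lemma leading_J_mul_det {g : Matrix (Fin n) (Fin n) ℂ}
    (hgen : ∀ k : ℕ, k ≤ n → IsUnit (flagPairMatrix g k)) (k : ℕ) (hk : k ≤ n) :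
    IsUnit (leading (J n * g) k hk).det := by
  set m := n - k with hm
  have hmk : m + k = n := by omega
  set E2 : Fin m ⊕ Fin k ≃ Fin n := finSumFinEquiv.trans (finCongr hmk) with hE2
  have hvl : ∀ a : Fin m, ((E2 (Sum.inl a)) : ℕ) = a := by intro a; simp [hE2]
  have hvr : ∀ b : Fin k, ((E2 (Sum.inr b)) : ℕ) = m + b := by intro b; simp [hE2]
  set B : Matrix (Fin k) (Fin k) ℂ :=
    Matrix.of (fun a b => g ⟨m + a.1, by omega⟩ (Fin.castLE hk b)) with hB
  set T : Matrix (Fin m) (Fin k) ℂ :=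
    Matrix.of (fun a b => g ⟨a.1, by omega⟩ (Fin.castLE hk b)) with hT
  have h1 : flagPairMatrix g m = (reindex E2 E2) (fromBlocks 1 T 0 B) := by
    ext i j
    obtain ⟨s, rfl⟩ := E2.surjective i
    obtain ⟨t, rfl⟩ := E2.surjective j
    rw [Matrix.reindex_apply, Matrix.submatrix_apply, Equiv.symm_apply_apply,
      Equiv.symm_apply_apply]
    cases s with
    | inl a =>
      cases t with
      | inl b =>
        have hc : ((E2 (Sum.inl b)) : ℕ) < m := by rw [hvl]; exact b.isLt
        rw [Matrix.fromBlocks_apply₁₁]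
        simp only [flagPairMatrix, Matrix.of_apply]
        rw [if_pos hc, Matrix.one_apply]
        by_cases hab : a = b
        · subst hab; rw [if_pos rfl, if_pos rfl]
        · have hne : ¬ ((E2 (Sum.inl a) : ℕ) = (E2 (Sum.inl b) : ℕ)) := by
            rw [hvl, hvl]
            exact fun habs => hab (Fin.ext habs)
          rw [if_neg hne, if_neg hab]
      | inr b =>
        have hc : ¬ ((E2 (Sum.inr b) : ℕ) < m) := by rw [hvr]; omega
        rw [Matrix.fromBlocks_apply₁₂]
        simp only [flagPairMatrix, Matrix.of_apply]
        rw [if_neg hc]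
        refine congrArg₂ g (Fin.ext ?_) (Fin.ext ?_)
        · exact hvl a
        · show (E2 (Sum.inr b) : ℕ) - m = ((Fin.castLE hk b : Fin n) : ℕ)
          rw [hvr]; simp
    | inr a =>
      cases t with
      | inl b =>
        have hc1 : ((E2 (Sum.inl b)) : ℕ) < m := by rw [hvl]; exact b.isLt
        have hc2 : ¬ ((E2 (Sum.inr a) : ℕ) = (E2 (Sum.inl b) : ℕ)) := by
          rw [hvr, hvl]; have hb := b.isLt; omega
        rw [Matrix.fromBlocks_apply₂₁]
        simp only [flagPairMatrix, Matrix.of_apply]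
        rw [if_pos hc1, if_neg hc2]
        simp
      | inr b =>
        have hc : ¬ ((E2 (Sum.inr b) : ℕ) < m) := by rw [hvr]; omega
        rw [Matrix.fromBlocks_apply₂₂]
        simp only [flagPairMatrix, Matrix.of_apply]
        rw [if_neg hc]
        refine congrArg₂ g (Fin.ext ?_) (Fin.ext ?_)
        · exact hvr a
        · show (E2 (Sum.inr b) : ℕ) - m = ((Fin.castLE hk b : Fin n) : ℕ)
          rw [hvr]; simp
  have h2 : IsUnit B.det := by
    have h0 := (Matrix.isUnit_iff_isUnit_det _).mp (hgen m (by omega))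
    rw [h1, Matrix.det_reindex_self, Matrix.det_fromBlocks_zero₂₁, Matrix.det_one,
      one_mul] at h0
    exact h0
  have h3 : leading (J n * g) k hk = B.submatrix (Fin.revPerm : Equiv.Perm (Fin k)) id := by
    ext i j
    show (J n * g) (Fin.castLE hk i) (Fin.castLE hk j) = B (Fin.revPerm i) j
    rw [J_mul]
    refine congrArg₂ g (Fin.ext ?_) rfl
    show ((Fin.castLE hk i).rev : ℕ) = m + ((Fin.rev i : Fin k) : ℕ)
    rw [Fin.val_rev, Fin.val_rev, Fin.coe_castLE]
    have := i.isLt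
    omega
  rw [h3, Matrix.det_permute]
  rcases Int.units_eq_one_or (Equiv.Perm.sign (Fin.revPerm : Equiv.Perm (Fin k))) with hs | hs <;>
    rw [hs] <;> simp [h2.ne_zero]


end CDNF

open CDNF in
/-- if `g` is invertible and the pair of affine flags `(N, gN)` is generic,
i.e. for every `k ∈ {0, …, n}` the matrix whose first `k` columns are `e₁, …, e_k` and
whose remaining columns are the first `n - k` columns of `g` is invertible, then there
exist unique unipotent upper-triangular matrices `x` and `y` such that `x⁻¹ * g * y` is
counter-diagonal. -/
theorem exists_unique_counterDiagonal_normal_form (n : ℕ) (hn : 1 ≤ n)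
    (g : Matrix (Fin n) (Fin n) ℂ) (hg : IsUnit g)
    (hgen : ∀ k : ℕ, k ≤ n → IsUnit (flagPairMatrix g k)) :
    ∃! p : Matrix (Fin n) (Fin n) ℂ × Matrix (Fin n) (Fin n) ℂ,
      IsUnipotentUpperTriangular p.1 ∧ IsUnipotentUpperTriangular p.2 ∧
        IsCounterDiagonal (p.1⁻¹ * g * p.2) := by
  classical
  obtain ⟨L, D, U, hL, hD, hU, hLDU⟩ :=
    ldu_exists n (J n * g) (fun k hk => leading_J_mul_det hgen k hk)
  have hLdet := hL.isUnitDet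
  have hUdet := UpU.isUnitDet hU
  set x₀ := J n * L * J n with hx₀
  set y₀ := U⁻¹ with hy₀
  have hx₀u : IsUnipotentUpperTriangular x₀ := upU_JLJ hL
  have hy₀u : IsUnipotentUpperTriangular y₀ := UpU.inv hU
  have hx₀inv : x₀⁻¹ = J n * L⁻¹ * J n := by
    apply Matrix.inv_eq_right_inv
    calc (J n * L * J n) * (J n * L⁻¹ * J n)
        = J n * (L * (J n * (J n * (L⁻¹ * J n)))) := by simp only [Matrix.mul_assoc]
      _ = J n * (L * (L⁻¹ * J n)) := by rw [J_J_cancel]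
      _ = J n * J n := by rw [Matrix.mul_nonsing_inv_cancel_left _ _ hLdet]
      _ = 1 := J_mul_J
  have hkey : x₀⁻¹ * g * y₀ = J n * D := by
    have hg' : g = J n * (L * D * U) := by rw [← hLDU, J_J_cancel]
    rw [hx₀inv, hy₀]
    conv_lhs => rw [hg']
    calc (J n * L⁻¹ * J n) * (J n * (L * D * U)) * U⁻¹
        = J n * (L⁻¹ * (J n * (J n * (L * (D * (U * U⁻¹)))))) := by
          simp only [Matrix.mul_assoc]
      _ = J n * (L⁻¹ * (J n * (J n * (L * (D * 1))))) := by
          rw [Matrix.mul_nonsing_inv _ hUdet]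
      _ = J n * (L⁻¹ * (L * (D * 1))) := by rw [J_J_cancel]
      _ = J n * (D * 1) := by rw [Matrix.nonsing_inv_mul_cancel_left _ _ hLdet]
      _ = J n * D := by rw [Matrix.mul_one]
  refine ⟨(x₀, y₀), ⟨hx₀u, hy₀u, ?_⟩, ?_⟩
  · show ∀ i j : Fin n, (i : ℕ) + (j : ℕ) + 1 ≠ n → (x₀⁻¹ * g * y₀) i j = 0
    rw [hkey]
    exact counterDiag_J_mul hD
  · rintro ⟨x, y⟩ ⟨hx, hy, hcd⟩
    simp only at hx hy hcd
    have hxdet := UpU.isUnitDet hx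
    have hydet := UpU.isUnitDet hy
    set α := x⁻¹ * g * y with hα
    have hgfact : J n * g = (J n * x * J n) * (J n * α) * y⁻¹ := by
      have h5 : α * y⁻¹ = x⁻¹ * g := by
        rw [hα, Matrix.mul_nonsing_inv_cancel_right _ _ hydet]
      have : (J n * x * J n) * (J n * α) * y⁻¹ = J n * g := by
        calc (J n * x * J n) * (J n * α) * y⁻¹
            = J n * (x * (J n * (J n * (α * y⁻¹)))) := by simp only [Matrix.mul_assoc]
          _ = J n * (x * (α * y⁻¹)) := by rw [J_J_cancel]
          _ = J n * (x * (x⁻¹ * g)) := by rw [h5]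
          _ = J n * g := by rw [Matrix.mul_nonsing_inv_cancel_left _ _ hxdet]
      exact this.symm
    have hJgdet : IsUnit (J n * g).det :=
      (Matrix.isUnit_iff_isUnit_det _).mp (isUnit_J.mul hg)
    obtain ⟨hLL, hDD, hUU⟩ :=
      ldu_unique hJgdet hL hD hU (lowU_JUJ hx) (diagP_J_mul hcd) (UpU.inv hy) hLDU hgfact
    have hx' : x = x₀ := by
      have hcancel : J n * (J n * x * J n) * J n = x := by
        calc J n * (J n * x * J n) * J n
            = J n * (J n * (x * (J n * J n))) := by simp only [Matrix.mul_assoc]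
          _ = J n * (J n * (x * 1)) := by rw [J_mul_J]
          _ = x * 1 := J_J_cancel _
          _ = x := Matrix.mul_one x
      rw [hx₀, hLL]
      exact hcancel.symm
    have hy' : y = y₀ := by
      rw [hy₀, hUU]
      exact (Matrix.nonsing_inv_nonsing_inv y hydet).symm
    exact Prod.ext hx' hy'
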